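/- Let μ be a locally determined positive measure on a σ-algebra Σ. Then the collection Σ^f = {B ∈ Σ : μ(B) < ∞} is a δ-ring (a ring of sets closed under countable intersections), the σ-algebra (Σ^f)^loc := {A ⊆ Ω : A ∩ B ∈ Σ^f for all B ∈ Σ^f} equals Σ, and the variation of the restriction λ = μ|_{Σ^f} equals μ. -/

import Mathlib

open MeasureTheory ENNReal
open scoped ENNReal

noncomputable section

variable {Ω : Type*} [MeasurableSpace Ω]
variable {X : Type*} [NormedAddCommGroup X] [NormedSpace ℝ X] [CompleteSpace X]

/-- `F` is weakly `μ`-measurable. -/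
def WeaklyMeasurable (μ : Measure Ω) (F : Ω → X) : Prop :=
  ∀ x' : StrongDual ℝ X, AEStronglyMeasurable (fun t => x' (F t)) μ

/-- `F` is Dunford integrable. -/
def DunfordIntegrable (μ : Measure Ω) (F : Ω → X) : Prop :=
  WeaklyMeasurable μ F ∧ ∀ x' : StrongDual ℝ X, Integrable (fun t => x' (F t)) μ

/-- The Dunford norm `sup_{‖x*‖ ≤ 1} ∫ |⟨F, x*⟩| dμ` (in `ℝ≥0∞`). -/
def dunfordNorm (μ : Measure Ω) (F : Ω → X) : ℝ≥0∞ :=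
  ⨆ (x' : StrongDual ℝ X) (_ : ‖x'‖ ≤ 1), ∫⁻ t, ENNReal.ofReal |x' (F t)| ∂μ

/-- `x` is the Pettis integral of `F` over `A`. -/
def IsPettisIntegralOn (μ : Measure Ω) (F : Ω → X) (A : Set Ω) (x : X) : Prop :=
  ∀ x' : StrongDual ℝ X, x' x = ∫ t in A, x' (F t) ∂μ

/-- `F` is Pettis integrable. -/
def PettisIntegrable (μ : Measure Ω) (F : Ω → X) : Prop :=
  DunfordIntegrable μ F ∧ ∀ A : Set Ω, MeasurableSet A → ∃ x : X, IsPettisIntegralOn μ F A x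

-- The Pettis integral of `F` over `A` (junk value `0` if it does not exist).
open Classical in
def pettisIntegral (μ : Measure Ω) (F : Ω → X) (A : Set Ω) : X :=
  if h : ∃ x : X, IsPettisIntegralOn μ F A x then h.choose else 0

/-- The δ-ring `Σ^f` of measurable sets of finite measure. -/
def finiteMeasureSets (μ : Measure Ω) : Set (Set Ω) :=
  {B | MeasurableSet B ∧ μ B < ∞}

/-- `F` is locally Pettis integrable. -/
def LocPettisIntegrable (μ : Measure Ω) (F : Ω → X) : Prop :=
  WeaklyMeasurable μ F ∧ ∀ B ∈ finiteMeasureSets μ, PettisIntegrable μ (B.indicator F)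

/-- `F` is locally Bochner integrable. -/
def LocBochnerIntegrable (μ : Measure Ω) (F : Ω → X) : Prop :=
  AEStronglyMeasurable F μ ∧ ∀ B ∈ finiteMeasureSets μ, Integrable (B.indicator F) μ

/-- The variation of a scalar set function `lam` defined on a δ-ring `R`,
evaluated at `A`: the supremum of `Σ_j |lam A_j|` over finite disjoint families
of members of `R` contained in `A`. -/
def scalarVariation (R : Set (Set Ω)) (lam : Set Ω → ℝ) (A : Set Ω) : ℝ≥0∞ :=
  ⨆ (P : Finset (Set Ω)) (_ : ∀ B ∈ P, B ∈ R ∧ B ⊆ A)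
    (_ : (P : Set (Set Ω)).PairwiseDisjoint id), ∑ B ∈ P, ENNReal.ofReal |lam B|

/-- The variation of a vector set function `ν` defined on a δ-ring `R`. -/
def vectorVariation (R : Set (Set Ω)) (ν : Set Ω → X) (A : Set Ω) : ℝ≥0∞ :=
  ⨆ (P : Finset (Set Ω)) (_ : ∀ B ∈ P, B ∈ R ∧ B ⊆ A)
    (_ : (P : Set (Set Ω)).PairwiseDisjoint id), ∑ B ∈ P, ENNReal.ofReal ‖ν B‖

/-- The semivariation of a vector set function `ν` defined on a δ-ring `R`. -/
def semivariation (R : Set (Set Ω)) (ν : Set Ω → X) (A : Set Ω) : ℝ≥0∞ :=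
  ⨆ (x' : StrongDual ℝ X) (_ : ‖x'‖ ≤ 1),
    scalarVariation R (fun B => x' (ν B)) A

/-- `μ` is semi-finite. -/
def SemiFinite (μ : Measure Ω) : Prop :=
  ∀ A : Set Ω, MeasurableSet A → 0 < μ A →
    ∃ B ⊆ A, MeasurableSet B ∧ 0 < μ B ∧ μ B < ∞

/-- `μ` is locally determined: it is semi-finite and a set is measurable as soon as
its intersection with every finite-measure set is measurable. -/
def LocallyDetermined (μ : Measure Ω) : Prop :=
  SemiFinite μ ∧ ∀ A : Set Ω,
    (∀ B ∈ finiteMeasureSets μ, MeasurableSet (A ∩ B)) → MeasurableSet A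


private lemma semifinite_sup (μ : Measure Ω) (hsf : SemiFinite μ) {A : Set Ω}
    (hA : MeasurableSet A) :
    μ A = ⨆ (B : Set Ω) (_ : B ⊆ A ∧ MeasurableSet B ∧ μ B < ∞), μ B := by
  set s := ⨆ (B : Set Ω) (_ : B ⊆ A ∧ MeasurableSet B ∧ μ B < ∞), μ B with hs
  have hle : s ≤ μ A := iSup₂_le fun B hB => measure_mono hB.1
  refine le_antisymm ?_ hle
  by_contra hlt
  push_neg at hlt
  have hsne : s ≠ ∞ := hlt.ne_top
  have hmem : ∀ B : Set Ω, B ⊆ A → MeasurableSet B → μ B < ∞ → μ B ≤ s := by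
    intro B h1 h2 h3
    exact le_iSup₂_of_le B ⟨h1, h2, h3⟩ le_rfl
  have hclaim : ∀ n : ℕ, ∃ B : Set Ω, B ⊆ A ∧ MeasurableSet B ∧ μ B < ∞ ∧
      s - (↑(n + 1) : ℝ≥0∞)⁻¹ < μ B := by
    intro n
    rcases eq_or_ne s 0 with h0 | h0
    · obtain ⟨B, hBA, hBm, hB0, hBf⟩ := hsf A hA (h0 ▸ hlt)
      exact ⟨B, hBA, hBm, hBf, lt_of_le_of_lt (by simp [h0, zero_tsub]) hB0⟩
    · have hd : s - (↑(n + 1) : ℝ≥0∞)⁻¹ < s :=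
        ENNReal.sub_lt_self hsne h0 (by simp)
      rw [hs] at hd
      simp only [lt_iSup_iff] at hd
      obtain ⟨B, hB, hBlt⟩ := hd
      exact ⟨B, hB.1, hB.2.1, hB.2.2, hBlt⟩
  choose B hBA hBm hBf hBlt using hclaim
  set C := ⋃ n, B n with hC
  have hCm : MeasurableSet C := MeasurableSet.iUnion hBm
  have hCA : C ⊆ A := Set.iUnion_subset hBA
  have hCle : μ C ≤ s := by
    rw [hC, ← Set.iUnion_accumulate,
      Directed.measure_iUnion Set.monotone_accumulate.directed_le]
    refine iSup_le fun n => hmem _ ?_ ?_ ?_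
    · rw [Set.accumulate_def]
      exact Set.iUnion₂_subset fun k _ => hBA k
    · rw [Set.accumulate_def]
      exact MeasurableSet.biUnion (Set.to_countable _) fun k _ => hBm k
    · rw [Set.accumulate_def]
      exact measure_biUnion_lt_top (Set.finite_Iic n) fun k _ => hBf k
  have hCge : s ≤ μ C := by
    refine ENNReal.le_of_forall_pos_le_add fun ε hε _ => ?_
    obtain ⟨n, hn⟩ := ENNReal.exists_inv_nat_lt
      (a := (↑ε : ℝ≥0∞)) (by exact_mod_cast hε.ne')
    have hinv : (↑(n + 1) : ℝ≥0∞)⁻¹ ≤ (↑ε : ℝ≥0∞) := by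
      refine le_trans ?_ hn.le
      exact ENNReal.inv_le_inv.mpr (by exact_mod_cast Nat.le_succ n)
    have h1 : s ≤ μ (B n) + (↑(n + 1) : ℝ≥0∞)⁻¹ :=
      tsub_le_iff_right.mp (hBlt n).le
    calc s ≤ μ (B n) + (↑(n + 1) : ℝ≥0∞)⁻¹ := h1
      _ ≤ μ C + ↑ε := add_le_add (measure_mono (Set.subset_iUnion B n)) hinv
  have hdpos : 0 < μ (A \ C) := by
    by_contra h
    push_neg at h
    have h0 : μ (A \ C) = 0 := le_antisymm h zero_le
    have hAle : μ A ≤ μ C := by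
      calc μ A ≤ μ (C ∪ A \ C) :=
            measure_mono (fun x hx => by
              by_cases hxC : x ∈ C
              · exact Or.inl hxC
              · exact Or.inr ⟨hx, hxC⟩)
        _ ≤ μ C + μ (A \ C) := measure_union_le _ _
        _ = μ C := by rw [h0, add_zero]
    exact absurd (hAle.trans hCle) hlt.not_ge
  obtain ⟨D, hDA, hDm, hD0, hDf⟩ := hsf (A \ C) (hA.diff hCm) hdpos
  have hdisj : Disjoint C D := (Set.disjoint_sdiff_left.mono_left hDA).symm
  have hE : μ (C ∪ D) ≤ s :=
    hmem _ (Set.union_subset hCA (hDA.trans Set.diff_subset)) (hCm.union hDm)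
      (by
        rw [measure_union hdisj hDm]
        exact ENNReal.add_lt_top.mpr ⟨hCle.trans_lt hsne.lt_top, hDf⟩)
  have hcontra : s < μ (C ∪ D) := by
    rw [measure_union hdisj hDm]
    calc s < s + μ D := ENNReal.lt_add_right hsne hD0.ne'
      _ ≤ μ C + μ D := add_le_add_left hCge _
  exact absurd (hcontra.trans_le hE) (lt_irrefl s)

/-- for a locally determined `μ`, `Σ^f` is a δ-ring, `(Σ^f)^loc = Σ`,
and the variation of `μ` restricted to `Σ^f` equals `μ`. -/
theorem stmt5 (μ : Measure Ω) (hμ : LocallyDetermined μ) :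
    (∀ A ∈ finiteMeasureSets μ, ∀ B ∈ finiteMeasureSets μ,
      A ∪ B ∈ finiteMeasureSets μ ∧ A \ B ∈ finiteMeasureSets μ) ∧
    (∀ A : ℕ → Set Ω, (∀ n, A n ∈ finiteMeasureSets μ) →
      (⋂ n, A n) ∈ finiteMeasureSets μ) ∧
    ({A : Set Ω | ∀ B ∈ finiteMeasureSets μ, A ∩ B ∈ finiteMeasureSets μ}
      = {A : Set Ω | MeasurableSet A}) ∧
    (∀ A : Set Ω, MeasurableSet A →
      scalarVariation (finiteMeasureSets μ) (fun B => (μ B).toReal) A = μ A) := by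
  refine ⟨?_, ?_, ?_, ?_⟩
  · rintro A ⟨hAm, hAf⟩ B ⟨hBm, hBf⟩
    refine ⟨⟨hAm.union hBm, ?_⟩, ⟨hAm.diff hBm, ?_⟩⟩
    · exact (measure_union_le A B).trans_lt (ENNReal.add_lt_top.mpr ⟨hAf, hBf⟩)
    · exact (measure_mono Set.diff_subset).trans_lt hAf
  · intro A hA
    refine ⟨MeasurableSet.iInter fun n => (hA n).1, ?_⟩
    exact (measure_mono (Set.iInter_subset A 0)).trans_lt (hA 0).2
  · ext A
    simp only [Set.mem_setOf_eq]
    constructor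
    · intro h
      exact hμ.2 A fun B hB => (h B hB).1
    · intro hAm B hB
      exact ⟨hAm.inter hB.1, (measure_mono Set.inter_subset_right).trans_lt hB.2⟩
  · intro A hA
    refine le_antisymm ?_ ?_
    · refine iSup_le fun P => iSup_le fun hP => iSup_le fun hPd => ?_
      have heq : ∀ B ∈ P, ENNReal.ofReal |((μ B).toReal)| = μ B := fun B hB => by
        rw [abs_of_nonneg ENNReal.toReal_nonneg,
          ENNReal.ofReal_toReal (hP B hB).1.2.ne]
      rw [Finset.sum_congr rfl heq]
      refine le_trans (le_of_eq
        (measure_biUnion_finset hPd (fun B hB => (hP B hB).1.1)).symm) ?_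
      exact measure_mono (Set.iUnion₂_subset fun B hB => (hP B hB).2)
    · rw [semifinite_sup μ hμ.1 hA]
      refine iSup₂_le fun B hB => ?_
      have h1 : ∀ C ∈ ({B} : Finset (Set Ω)), C ∈ finiteMeasureSets μ ∧ C ⊆ A := by
        intro C hC
        rw [Finset.mem_singleton] at hC
        subst hC
        exact ⟨⟨hB.2.1, hB.2.2⟩, hB.1⟩
      have h2 : (({B} : Finset (Set Ω)) : Set (Set Ω)).PairwiseDisjoint id := by
        simp
      calc μ B = ∑ C ∈ ({B} : Finset (Set Ω)), ENNReal.ofReal |(μ C).toReal| := by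
            simp [abs_of_nonneg ENNReal.toReal_nonneg,
              ENNReal.ofReal_toReal hB.2.2.ne]
        _ ≤ ⨆ (_ : (({B} : Finset (Set Ω)) : Set (Set Ω)).PairwiseDisjoint id),
              ∑ C ∈ ({B} : Finset (Set Ω)),
                ENNReal.ofReal |(fun B => (μ B).toReal) C| :=
            le_iSup_of_le h2 le_rfl
        _ ≤ _ := le_iSup₂_of_le {B} h1 le_rfl

end
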